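/- Let ξ(x) = Σ_{k≥2} γ_k² x^k with γ_k ≥ 0, convergent on [0,1], ξ''(0) > 0, and suppose there exists q_c ∈ (0,1) with (−log(1−q_c) − q_c)/ξ(q_c) ≤ 1/ξ''(0). Then for all sufficiently small ε > 0, setting ξ̃(x) = ξ(x) + ε(x^p − x²) for any fixed p ≥ 3 (with γ_2² > ε so ξ̃ has nonnegative coefficients), one has inf_{q∈(0,1)} (−log(1−q) − q)/ξ̃(q) < 1/ξ̃''(0). -/

import Mathlib

open Real Set

lemma log_lb {q : ℝ} (hq0 : 0 ≤ q) (hq1 : q < 1) :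
    q + q ^ 2 / 2 ≤ -Real.log (1 - q) := by
  have hd : ∀ x ∈ Ioo (0:ℝ) 1,
      HasDerivAt (fun y : ℝ => -Real.log (1 - y) - y - y ^ 2 / 2)
        ((1 - x)⁻¹ - 1 - x) x := by
    intro x hx
    have hne : (1 : ℝ) - x ≠ 0 := by nlinarith [hx.2]
    have h1 : HasDerivAt (fun y : ℝ => 1 - y) (-1) x := by
      simpa using (hasDerivAt_id x).const_sub 1
    have h2 : HasDerivAt (fun y : ℝ => Real.log (1 - y)) ((1 - x)⁻¹ * (-1)) x :=
      (Real.hasDerivAt_log hne).comp x h1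
    have h3 : HasDerivAt (fun y : ℝ => y ^ 2 / 2) (2 * x ^ 1 / 2) x :=
      (hasDerivAt_pow 2 x).div_const 2
    have := (h2.neg.sub (hasDerivAt_id x)).sub h3
    exact this.congr_deriv (by ring)
  have key : MonotoneOn (fun y : ℝ => -Real.log (1 - y) - y - y ^ 2 / 2) (Ico 0 1) := by
    apply monotoneOn_of_deriv_nonneg (convex_Ico 0 1)
    · apply ContinuousOn.sub
      apply ContinuousOn.sub
      · apply ContinuousOn.neg
        apply Real.continuousOn_log.comp (by fun_prop)
        intro x hx
        simp only [mem_Ico] at hx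
        simp only [Set.mem_compl_iff, Set.mem_singleton_iff]
        nlinarith [hx.2]
      · exact continuousOn_id
      · fun_prop
    · intro x hx
      rw [interior_Ico] at hx
      exact (hd x hx).differentiableAt.differentiableWithinAt
    · intro x hx
      rw [interior_Ico] at hx
      rw [(hd x hx).deriv]
      have h01 : (0:ℝ) < 1 - x := by nlinarith [hx.2]
      have hinv : (1 - x)⁻¹ * (1 - x) = 1 := inv_mul_cancel₀ (ne_of_gt h01)
      have hipos : 0 < (1 - x)⁻¹ := inv_pos.mpr h01
      nlinarith [hx.1, mul_pos hipos h01]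
  have h0 : (0:ℝ) ∈ Ico (0:ℝ) 1 := by constructor <;> norm_num
  have hq : q ∈ Ico (0:ℝ) 1 := ⟨hq0, hq1⟩
  have := key h0 hq hq0
  simp only [Real.log_one, sub_zero] at this
  nlinarith [this]

/-- genericity of `β_c < β_cont` under perturbation. If there is
`q_c ∈ (0,1)` with `κ(q_c) ≤ 1/ξ''(0)`, then for all small `ε > 0` (with
`ε < γ₂²`), the perturbed mixture `ξ̃(x) = ξ(x) + ε(x^p − x²)` satisfies
`inf_{q∈(0,1)} (−log(1−q) − q)/ξ̃(q) < 1/ξ̃''(0) = 1/(ξ''(0) − 2ε)`. -/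
theorem stmt_11
    (γ : ℕ → ℝ) (hγ : ∀ k, 0 ≤ γ k)
    (hγ2 : 0 < 2 * γ 2 ^ 2)
    (ξ : ℝ → ℝ)
    (hξ : ∀ x : ℝ, ξ x = ∑' k : ℕ, γ (k + 2) ^ 2 * x ^ (k + 2))
    (hsum : Summable fun k : ℕ => γ (k + 2) ^ 2 * (1 : ℝ) ^ (k + 2))
    (p : ℕ) (hp : 3 ≤ p)
    (qc : ℝ) (hqc : qc ∈ Ioo (0 : ℝ) 1)
    (hκ : (-Real.log (1 - qc) - qc) / ξ qc ≤ 1 / (2 * γ 2 ^ 2)) :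
    ∃ ε0 > 0, ∀ ε : ℝ, 0 < ε → ε ≤ ε0 → ε < γ 2 ^ 2 →
      sInf ((fun q : ℝ =>
          (-Real.log (1 - q) - q) / (ξ q + ε * (q ^ p - q ^ 2))) '' Ioo (0 : ℝ) 1) <
        1 / (2 * γ 2 ^ 2 - 2 * ε) := by
  have hγ2' : 0 < γ 2 ^ 2 := by nlinarith
  -- lower bound for ξ
  have hξ_lb : ∀ q ∈ Ioo (0:ℝ) 1, γ 2 ^ 2 * q ^ 2 ≤ ξ q := by
    intro q hq
    have hs : Summable fun k : ℕ => γ (k + 2) ^ 2 * q ^ (k + 2) := by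
      apply Summable.of_nonneg_of_le (fun k => mul_nonneg (sq_nonneg _) (pow_nonneg hq.1.le _)) (fun k => ?_) hsum
      have hq1 : q ^ (k + 2) ≤ 1 ^ (k + 2) := by
        apply pow_le_pow_left₀ hq.1.le hq.2.le
      nlinarith [sq_nonneg (γ (k + 2)), pow_nonneg hq.1.le (k+2)]
    have := Summable.le_tsum hs 0 (fun j _ => mul_nonneg (sq_nonneg _) (pow_nonneg hq.1.le _))
    rw [hξ]
    simpa using this
  -- positivity of numerator
  have hnum : ∀ q ∈ Ioo (0:ℝ) 1, 0 < -Real.log (1 - q) - q := by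
    intro q hq
    have := log_lb hq.1.le hq.2
    nlinarith [sq_nonneg q, pow_pos hq.1 2]
  refine ⟨1, one_pos, fun ε hε hε1 hεγ => ?_⟩
  have hcε : 0 < 2 * γ 2 ^ 2 - 2 * ε := by nlinarith
  -- positivity of denominator
  have hden : ∀ q ∈ Ioo (0:ℝ) 1, 0 < ξ q + ε * (q ^ p - q ^ 2) := by
    intro q hq
    have h1 := hξ_lb q hq
    have hqp : 0 < q ^ p := pow_pos hq.1 p
    have hq2 : 0 < q ^ 2 := pow_pos hq.1 2
    nlinarith [mul_pos (sub_pos.mpr hεγ) hq2, mul_pos hε hqp]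
  have hbdd : BddBelow ((fun q : ℝ =>
      (-Real.log (1 - q) - q) / (ξ q + ε * (q ^ p - q ^ 2))) '' Ioo (0 : ℝ) 1) := by
    refine ⟨0, ?_⟩
    rintro y ⟨q, hq, rfl⟩
    exact le_of_lt (div_pos (hnum q hq) (hden q hq))
  refine lt_of_le_of_lt (csInf_le hbdd (mem_image_of_mem _ hqc)) ?_
  have hξpos : 0 < ξ qc := lt_of_lt_of_le (mul_pos hγ2' (pow_pos hqc.1 2)) (hξ_lb qc hqc)
  have hNpos := hnum qc hqc
  have hDpos := hden qc hqc
  rw [div_lt_div_iff₀ hDpos hcε]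
  have hNc : (-Real.log (1 - qc) - qc) * (2 * γ 2 ^ 2) ≤ 1 * ξ qc :=
    (div_le_div_iff₀ hξpos hγ2).mp hκ
  have hlb := log_lb hqc.1.le hqc.2
  have h2N : qc ^ 2 ≤ 2 * (-Real.log (1 - qc) - qc) := by nlinarith
  have hmul : ε * qc ^ 2 ≤ ε * (2 * (-Real.log (1 - qc) - qc)) :=
    mul_le_mul_of_nonneg_left h2N hε.le
  have hqp : 0 < qc ^ p := pow_pos hqc.1 p
  nlinarith [mul_pos hε hqp]
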